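/- Let E be a real normed vector space equipped with its Borel σ-algebra, let κ be a Markov kernel from E to E, and let μ be a probability measure on E that is invariant for κ (for every bounded measurable f, ∫_E (∫_E f dκ(x)) μ(dx) = ∫_E f dμ). Assume there is c ≥ 0 such that for every bounded measurable f ≥ 0 and all x, y ∈ E, (∫ f dκ(x))² ≤ (∫ f² dκ(y)) · e^{c‖x − y‖²}, and assume r > 0 satisfies μ({x : ‖x‖ < r}) ≥ 1/2. If moreover E0 := ∫_E e^{2c(‖x‖ + r)²} μ(dx) < ∞, then for every bounded measurable f ≥ 0, ∫_E (∫ f dκ(x))⁴ μ(dx) ≤ 4 E0 · (∫ f² dμ)²; i.e. the Markov operator Pf(x) = ∫ f dκ(x) is bounded from L²(μ) to L⁴(μ) with norm at most (4E0)^{1/4} on nonnegative functions. -/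

import Mathlib

open MeasureTheory ProbabilityTheory Real

/-- Hyperboundedness conclusion of step (a) in the proof of Theorem 1.1: under the
Harnack inequality and invariance of `μ`, if `E0 = ∫ e^{2c(‖x‖+r)²} μ(dx) < ∞` then
`∫ (∫ f dκ(x))⁴ μ(dx) ≤ 4 E0 (∫ f² dμ)²` for every bounded measurable `f ≥ 0`. -/
theorem harnack_hyperboundedness
    {E : Type*} [NormedAddCommGroup E] [NormedSpace ℝ E]
    [MeasurableSpace E] [BorelSpace E]
    (κ : ProbabilityTheory.Kernel E E) [ProbabilityTheory.IsMarkovKernel κ]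
    (μ : MeasureTheory.Measure E) [MeasureTheory.IsProbabilityMeasure μ]
    (hinv : ∀ f : E → ℝ, Measurable f → (∃ C, ∀ x, |f x| ≤ C) →
      ∫ x, (∫ y, f y ∂(κ x)) ∂μ = ∫ y, f y ∂μ)
    (c : ℝ) (hc : 0 ≤ c)
    (harnack : ∀ f : E → ℝ, Measurable f → (∃ C, ∀ x, |f x| ≤ C) → (∀ x, 0 ≤ f x) →
      ∀ x y : E, (∫ z, f z ∂(κ x)) ^ 2 ≤
        (∫ z, (f z) ^ 2 ∂(κ y)) * Real.exp (c * ‖x - y‖ ^ 2))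
    (r : ℝ) (hr : 0 < r) (hμr : (1 : ENNReal) / 2 ≤ μ {x : E | ‖x‖ < r})
    (hE0 : MeasureTheory.Integrable (fun x => Real.exp (2 * c * (‖x‖ + r) ^ 2)) μ) :
    ∀ f : E → ℝ, Measurable f → (∃ C, ∀ x, |f x| ≤ C) → (∀ x, 0 ≤ f x) →
      ∫ x, (∫ z, f z ∂(κ x)) ^ 4 ∂μ ≤
        4 * (∫ x, Real.exp (2 * c * (‖x‖ + r) ^ 2) ∂μ) * (∫ z, (f z) ^ 2 ∂μ) ^ 2 := by
  intro f hf hfb hf0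
  obtain ⟨C, hC⟩ := hfb
  set I : ℝ := ∫ z, (f z) ^ 2 ∂μ with hI
  have hI0 : 0 ≤ I := integral_nonneg fun z => sq_nonneg _
  -- measurability of kernel integrals
  have hPmeas : ∀ (h : E → ℝ), Measurable h → Measurable (fun x => ∫ z, h z ∂κ x) := by
    intro h hh
    have h1 : StronglyMeasurable (Function.uncurry fun (_ : E) y => h y) :=
      (hh.comp measurable_snd).stronglyMeasurable
    exact h1.integral_kernel_prod_right.measurable
  -- boundedness of kernel integrals
  have hPb : ∀ (h : E → ℝ) (D : ℝ), (∀ x, |h x| ≤ D) → ∀ x, |∫ z, h z ∂κ x| ≤ D := by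
    intro h D hD x
    have := norm_integral_le_of_norm_le_const
      (μ := κ x) (f := h) (C := D) (Filter.Eventually.of_forall fun z => hD z)
    simpa using this
  have hgm : Measurable (fun z => (f z) ^ 2) := hf.pow_const 2
  have hgb : ∀ x, |(f x) ^ 2| ≤ C ^ 2 := by
    intro x
    rw [abs_pow]
    exact pow_le_pow_left₀ (abs_nonneg _) (hC x) 2
  have hIg : ∫ x, (∫ z, (f z) ^ 2 ∂κ x) ∂μ = I :=
    hinv (fun z => (f z) ^ 2) hgm ⟨C ^ 2, hgb⟩
  have hPg_int : Integrable (fun x => ∫ z, (f z) ^ 2 ∂κ x) μ := by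
    apply Integrable.mono' (integrable_const (C ^ 2))
      ((hPmeas _ hgm).aestronglyMeasurable)
    filter_upwards with x
    simpa using hPb _ (C ^ 2) hgb x
  have hBmeas : MeasurableSet {x : E | ‖x‖ < r} :=
    measurableSet_lt measurable_norm measurable_const
  have hμB : (1 / 2 : ℝ) ≤ (μ {x : E | ‖x‖ < r}).toReal := by
    have := ENNReal.toReal_mono (measure_ne_top μ _) hμr
    simpa using this
  -- key pointwise bound: (Pf x)^2 ≤ 2 exp(c(‖x‖+r)²) I
  have key : ∀ x, (∫ z, f z ∂κ x) ^ 2 ≤ 2 * Real.exp (c * (‖x‖ + r) ^ 2) * I := by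
    intro x
    set a : ℝ := (∫ z, f z ∂κ x) ^ 2 * Real.exp (-(c * (‖x‖ + r) ^ 2)) with ha
    have ha0 : 0 ≤ a := mul_nonneg (sq_nonneg _) (Real.exp_pos _).le
    have hlow : ∀ y ∈ {x : E | ‖x‖ < r}, a ≤ ∫ z, (f z) ^ 2 ∂κ y := by
      intro y hy
      have h1 := harnack f hf ⟨C, hC⟩ hf0 x y
      have h2 : ‖x - y‖ ^ 2 ≤ (‖x‖ + r) ^ 2 := by
        have hxy : ‖x - y‖ ≤ ‖x‖ + r := by
          have := norm_sub_le x y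
          have hyr : ‖y‖ < r := hy
          linarith
        exact pow_le_pow_left₀ (norm_nonneg _) hxy 2
      have h4 : 0 ≤ ∫ z, (f z) ^ 2 ∂κ y := integral_nonneg fun z => sq_nonneg _
      have h3 : (∫ z, (f z) ^ 2 ∂κ y) * Real.exp (c * ‖x - y‖ ^ 2) ≤
          (∫ z, (f z) ^ 2 ∂κ y) * Real.exp (c * (‖x‖ + r) ^ 2) :=
        mul_le_mul_of_nonneg_left
          (Real.exp_le_exp.mpr (mul_le_mul_of_nonneg_left h2 hc)) h4
      calc a ≤ ((∫ z, (f z) ^ 2 ∂κ y) * Real.exp (c * (‖x‖ + r) ^ 2)) *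
              Real.exp (-(c * (‖x‖ + r) ^ 2)) :=
            mul_le_mul_of_nonneg_right (h1.trans h3) (Real.exp_pos _).le
        _ = ∫ z, (f z) ^ 2 ∂κ y := by rw [mul_assoc, ← Real.exp_add]; simp
    have h5 : a * (μ {x : E | ‖x‖ < r}).toReal ≤
        ∫ y in {x : E | ‖x‖ < r}, (∫ z, (f z) ^ 2 ∂κ y) ∂μ :=
      setIntegral_ge_of_const_le_real hBmeas (measure_ne_top μ _) hlow hPg_int.integrableOn
    have h6 : ∫ y in {x : E | ‖x‖ < r}, (∫ z, (f z) ^ 2 ∂κ y) ∂μ ≤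
        ∫ y, (∫ z, (f z) ^ 2 ∂κ y) ∂μ :=
      setIntegral_le_integral hPg_int
        (Filter.Eventually.of_forall fun y => integral_nonneg fun z => sq_nonneg _)
    have h7 : a * (1 / 2) ≤ I := by
      have h8 : a * (1 / 2) ≤ a * (μ {x : E | ‖x‖ < r}).toReal :=
        mul_le_mul_of_nonneg_left hμB ha0
      have := (h5.trans h6).trans_eq hIg
      linarith
    have h8 : a ≤ 2 * I := by linarith
    calc (∫ z, f z ∂κ x) ^ 2
        = a * Real.exp (c * (‖x‖ + r) ^ 2) := by
          rw [ha, mul_assoc, ← Real.exp_add]; simp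
      _ ≤ (2 * I) * Real.exp (c * (‖x‖ + r) ^ 2) :=
          mul_le_mul_of_nonneg_right h8 (Real.exp_pos _).le
      _ = 2 * Real.exp (c * (‖x‖ + r) ^ 2) * I := by ring
  have key4 : ∀ x, (∫ z, f z ∂κ x) ^ 4 ≤ 4 * Real.exp (2 * c * (‖x‖ + r) ^ 2) * I ^ 2 := by
    intro x
    calc (∫ z, f z ∂κ x) ^ 4 = ((∫ z, f z ∂κ x) ^ 2) ^ 2 := by ring
      _ ≤ (2 * Real.exp (c * (‖x‖ + r) ^ 2) * I) ^ 2 :=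
          pow_le_pow_left₀ (sq_nonneg _) (key x) 2
      _ = 4 * Real.exp (2 * c * (‖x‖ + r) ^ 2) * I ^ 2 := by
          rw [show (2 : ℝ) * c * (‖x‖ + r) ^ 2 =
            c * (‖x‖ + r) ^ 2 + c * (‖x‖ + r) ^ 2 by ring, Real.exp_add]
          ring
  have hlhs_int : Integrable (fun x => (∫ z, f z ∂κ x) ^ 4) μ := by
    apply Integrable.mono' (integrable_const (C ^ 4))
      (((hPmeas f hf).pow_const 4).aestronglyMeasurable)
    filter_upwards with x
    calc ‖(∫ z, f z ∂κ x) ^ 4‖ = |∫ z, f z ∂κ x| ^ 4 := by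
          rw [Real.norm_eq_abs, abs_pow]
      _ ≤ C ^ 4 := pow_le_pow_left₀ (abs_nonneg _) (hPb f C hC x) 4
  have hrhs_int : Integrable (fun x => 4 * Real.exp (2 * c * (‖x‖ + r) ^ 2) * I ^ 2) μ := by
    have := (hE0.const_mul 4).mul_const (I ^ 2)
    simpa [mul_assoc, mul_comm, mul_left_comm] using this
  calc ∫ x, (∫ z, f z ∂κ x) ^ 4 ∂μ
      ≤ ∫ x, 4 * Real.exp (2 * c * (‖x‖ + r) ^ 2) * I ^ 2 ∂μ :=
        integral_mono hlhs_int hrhs_int key4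
    _ = 4 * (∫ x, Real.exp (2 * c * (‖x‖ + r) ^ 2) ∂μ) * I ^ 2 := by
        rw [integral_mul_const, integral_const_mul]
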